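/- Subadditivity chain for f_n: For every positive integer n and all real x, y > 0, f_n(x) + f_n(y) ≥ f_n(x + y) ≥ [f_n(2x) + f_n(2y)]/2. -/

import Mathlib

open Real Set Filter


/-- The function `f_n(m)` of Eq. (13): tight bound relating von Neumann entropy
and log-determinant of Gaussian states, with `coth t = cosh t / sinh t`. -/
noncomputable def f (n : ℕ) (m : ℝ) : ℝ :=
  ((n : ℝ) / 2) * (Real.log ((Real.exp (m / (n : ℝ)) - 1) / 4)
    + Real.exp (m / (2 * (n : ℝ))) *
        Real.log (Real.cosh (m / (4 * (n : ℝ))) / Real.sinh (m / (4 * (n : ℝ)))))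


private lemma hasDerivAt_Fq {q : ℝ} (h0 : -1 < q) (h1 : q < 1) :
    HasDerivAt (fun q : ℝ => 2*q - (1-q^2) * (Real.log (1+q) - Real.log (1-q)))
      (2*q*(Real.log (1+q) - Real.log (1-q))) q := by
  have hp : (1:ℝ) + q ≠ 0 := by nlinarith
  have hm : (1:ℝ) - q ≠ 0 := by nlinarith
  have hL1 : HasDerivAt (fun q : ℝ => Real.log (1+q)) (1/(1+q)) q := by
    simpa using (((hasDerivAt_id q).const_add 1).log hp)
  have hL2 : HasDerivAt (fun q : ℝ => Real.log (1-q)) ((-1)/(1-q)) q := by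
    simpa using (((hasDerivAt_id q).const_sub 1).log hm)
  have hsq : HasDerivAt (fun q : ℝ => 1 - q^2) (-(2*q)) q := by
    simpa using ((hasDerivAt_pow 2 q).const_sub 1)
  have h2q : HasDerivAt (fun q : ℝ => 2*q) 2 q := by
    simpa using (hasDerivAt_id q).const_mul 2
  have := h2q.sub (hsq.mul (hL1.sub hL2))
  refine this.congr_deriv ?_
  have e1 : (1 - q^2) * (1/(1+q) - (-1)/(1-q)) = 2 := by
    field_simp
    ring
  simp only [Pi.sub_apply]
  nlinarith [e1]

private lemma q_ineq {q : ℝ} (h0 : 0 ≤ q) (h1 : q < 1) :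
    (1 - q^2) * (Real.log (1+q) - Real.log (1-q)) ≤ 2*q := by
  set F : ℝ → ℝ := fun q => 2*q - (1-q^2) * (Real.log (1+q) - Real.log (1-q)) with hF
  have mono : MonotoneOn F (Ico (0:ℝ) 1) := by
    apply monotoneOn_of_hasDerivWithinAt_nonneg (convex_Ico (0:ℝ) 1)
      (f' := fun q => 2*q*(Real.log (1+q) - Real.log (1-q)))
    · intro x hx
      exact (hasDerivAt_Fq (by linarith [hx.1]) hx.2).continuousAt.continuousWithinAt
    · intro x hx
      rw [interior_Ico] at hx
      exact (hasDerivAt_Fq (by linarith [hx.1]) hx.2).hasDerivWithinAt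
    · intro x hx
      rw [interior_Ico] at hx
      have : Real.log (1-x) ≤ Real.log (1+x) := by
        apply Real.log_le_log (by linarith [hx.2]) (by linarith [hx.1])
      have h0x := hx.1
      nlinarith
  have h00 : F 0 = 0 := by simp [hF]
  have := mono (show (0:ℝ) ∈ Ico (0:ℝ) 1 by constructor <;> norm_num)
    (show q ∈ Ico (0:ℝ) 1 from ⟨h0, h1⟩) h0
  rw [h00] at this
  simp only [hF] at this
  linarith

private lemma log_coth_le {t : ℝ} (ht : 0 < t) :
    Real.log (Real.cosh t) - Real.log (Real.sinh t) ≤ 1 / (2 * Real.sinh t * Real.cosh t) := by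
  set q := Real.exp (-(2*t)) with hq
  have hq0 : 0 < q := Real.exp_pos _
  have hq1 : q < 1 := by
    rw [hq, Real.exp_lt_one_iff]; linarith
  have hu : Real.exp (-t) = Real.exp t * q := by
    rw [hq, ← Real.exp_add]; ring_nf
  have hqe : q * (Real.exp t * Real.exp t) = 1 := by
    rw [hq, ← Real.exp_add, ← Real.exp_add]; ring_nf; exact Real.exp_zero
  have hc : Real.cosh t = Real.exp t * ((1+q)/2) := by
    rw [Real.cosh_eq, hu]; ring
  have hs : Real.sinh t = Real.exp t * ((1-q)/2) := by
    rw [Real.sinh_eq, hu]; ring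
  have hLc : Real.log (Real.cosh t) = t + (Real.log (1+q) - Real.log 2) := by
    rw [hc, Real.log_mul (Real.exp_ne_zero t) (by nlinarith), Real.log_exp,
      Real.log_div (by nlinarith) (by norm_num)]
  have hLs : Real.log (Real.sinh t) = t + (Real.log (1-q) - Real.log 2) := by
    rw [hs, Real.log_mul (Real.exp_ne_zero t) (by nlinarith), Real.log_exp,
      Real.log_div (by nlinarith) (by norm_num)]
  have he2 : Real.exp t * Real.exp t = 1/q := by
    field_simp [hq0.ne'] at hqe ⊢; linarith [hqe]
  have hsc : 2 * Real.sinh t * Real.cosh t = (1 - q^2)/(2*q) := by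
    rw [hs, hc]
    field_simp [hq0.ne']
    nlinarith [hqe]
  rw [hLc, hLs, hsc, one_div_div]
  have h2 : (0:ℝ) < 1 - q^2 := by nlinarith
  rw [le_div_iff₀ h2]
  nlinarith [q_ineq hq0.le hq1]

noncomputable def gg (t : ℝ) : ℝ :=
  2*t + (1 + Real.exp (2*t)) * Real.log (Real.cosh t)
      + (1 - Real.exp (2*t)) * Real.log (Real.sinh t)

noncomputable def gg1 (t : ℝ) : ℝ :=
  2 + 2 * Real.exp (2*t) * (Real.log (Real.cosh t) - Real.log (Real.sinh t))
    + (1 + Real.exp (2*t)) * (Real.sinh t / Real.cosh t)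
    + (1 - Real.exp (2*t)) * (Real.cosh t / Real.sinh t)

noncomputable def gg2 (t : ℝ) : ℝ :=
  4 * Real.exp (2*t) * ((Real.log (Real.cosh t) - Real.log (Real.sinh t))
      - 1 / (2 * Real.sinh t * Real.cosh t))

lemma hasDerivAt_exp2 (t : ℝ) : HasDerivAt (fun u : ℝ => Real.exp (2*u)) (2 * Real.exp (2*t)) t := by
  have h := (Real.hasDerivAt_exp (2*t)).comp t ((hasDerivAt_id t).const_mul 2)
  have h2 : HasDerivAt (fun u : ℝ => Real.exp (2*u)) (Real.exp (2*t) * (2 * 1)) t := h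
  have e : (2:ℝ) * Real.exp (2*t) = Real.exp (2*t) * (2 * 1) := by ring
  rw [e]; exact h2

lemma hasDerivAt_gg {t : ℝ} (ht : 0 < t) : HasDerivAt gg (gg1 t) t := by
  have hs0 : (0:ℝ) < Real.sinh t := by rwa [Real.sinh_pos_iff]
  have hs : Real.sinh t ≠ 0 := ne_of_gt hs0
  have hc : Real.cosh t ≠ 0 := ne_of_gt (Real.cosh_pos t)
  have hE := hasDerivAt_exp2 t
  have hLc : HasDerivAt (fun u => Real.log (Real.cosh u)) (Real.sinh t / Real.cosh t) t :=
    (Real.hasDerivAt_cosh t).log hc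
  have hLs : HasDerivAt (fun u => Real.log (Real.sinh u)) (Real.cosh t / Real.sinh t) t :=
    (Real.hasDerivAt_sinh t).log hs
  have h1 : HasDerivAt (fun u : ℝ => 2*u) 2 t := by
    simpa using (hasDerivAt_id t).const_mul 2
  have h2 := (hE.const_add 1).mul hLc
  have h3 := ((hasDerivAt_const t 1).sub hE).mul hLs
  have := (h1.add h2).add h3
  refine this.congr_deriv ?_
  simp only [Pi.sub_apply]
  unfold gg1
  ring

lemma hasDerivAt_gg1 {t : ℝ} (ht : 0 < t) : HasDerivAt gg1 (gg2 t) t := by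
  have hs0 : (0:ℝ) < Real.sinh t := by rwa [Real.sinh_pos_iff]
  have hs : Real.sinh t ≠ 0 := ne_of_gt hs0
  have hc0 : (0:ℝ) < Real.cosh t := Real.cosh_pos t
  have hc : Real.cosh t ≠ 0 := ne_of_gt hc0
  have hE := hasDerivAt_exp2 t
  have hLc : HasDerivAt (fun u => Real.log (Real.cosh u)) (Real.sinh t / Real.cosh t) t :=
    (Real.hasDerivAt_cosh t).log hc
  have hLs : HasDerivAt (fun u => Real.log (Real.sinh u)) (Real.cosh t / Real.sinh t) t :=
    (Real.hasDerivAt_sinh t).log hs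
  have htanh : HasDerivAt (fun u => Real.sinh u / Real.cosh u)
      ((Real.cosh t * Real.cosh t - Real.sinh t * Real.sinh t) / (Real.cosh t)^2) t :=
    (Real.hasDerivAt_sinh t).div (Real.hasDerivAt_cosh t) hc
  have hcoth : HasDerivAt (fun u => Real.cosh u / Real.sinh u)
      ((Real.sinh t * Real.sinh t - Real.cosh t * Real.cosh t) / (Real.sinh t)^2) t :=
    (Real.hasDerivAt_cosh t).div (Real.hasDerivAt_sinh t) hs
  have h2 := ((hE.const_mul 2).mul (hLc.sub hLs))
  have h3 := (hE.const_add 1).mul htanh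
  have h4 := ((hasDerivAt_const t 1).sub hE).mul hcoth
  have H := (((hasDerivAt_const t 2).add h2).add h3).add h4
  refine H.congr_deriv ?_
  symm
  simp only [Pi.sub_apply]
  have hEsq : Real.exp (2*t) = (Real.cosh t + Real.sinh t)^2 := by
    rw [Real.cosh_add_sinh, sq, ← Real.exp_add, two_mul]
  unfold gg2
  rw [hEsq]
  set Lc := Real.log (Real.cosh t)
  set Ls := Real.log (Real.sinh t)
  set c := Real.cosh t
  set s := Real.sinh t
  have hid : c ^ 2 - s ^ 2 = 1 := Real.cosh_sq_sub_sinh_sq t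
  field_simp
  linear_combination ((-2)*c^0*s^4 + (4)*c^1*s^3 + (12)*c^2*s^2 + (4)*c^3*s^1 + (-2)*c^4*s^0) * hid

lemma gg_zero : gg 0 = 0 := by
  simp [gg]

lemma tendsto_gg_zero : Tendsto gg (nhdsWithin 0 (Ioi 0)) (nhds 0) := by
  have hA : Tendsto (fun t : ℝ => 2*t + (1 + Real.exp (2*t)) * Real.log (Real.cosh t))
      (nhdsWithin 0 (Ioi 0)) (nhds 0) := by
    have cont : ContinuousAt (fun t : ℝ => 2*t + (1 + Real.exp (2*t)) * Real.log (Real.cosh t)) 0 := by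
      have h1 : ContinuousAt Real.cosh 0 := Real.continuous_cosh.continuousAt
      have hl : ContinuousAt (fun t : ℝ => Real.log (Real.cosh t)) 0 :=
        h1.log (by simp [Real.cosh_zero])
      exact (continuousAt_const.mul continuousAt_id).add
        ((continuousAt_const.add (Real.continuous_exp.continuousAt.comp
          (continuousAt_const.mul continuousAt_id))).mul hl)
    have h2 := cont.tendsto.mono_left (nhdsWithin_le_nhds (s := Ioi (0:ℝ)))
    simpa using h2
  have hB : Tendsto (fun t : ℝ => (1 - Real.exp (2*t)) * Real.log (Real.sinh t))
      (nhdsWithin 0 (Ioi 0)) (nhds 0) := by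
    apply squeeze_zero_norm' (a := fun t : ℝ => 6 * ‖Real.log t * t‖)
    · filter_upwards [Ioo_mem_nhdsGT_of_mem (show (0:ℝ) ∈ Ico 0 (1/4) by constructor <;> norm_num)]
        with t htm
      obtain ⟨ht0, ht4⟩ := htm
      have hE1 : 1 ≤ Real.exp (2*t) := Real.one_le_exp (by linarith)
      have hEkey : Real.exp (2*t) - 1 ≤ 6*t := by
        have h := Real.add_one_le_exp (-(2*t))
        rw [Real.exp_neg] at h
        have hp : (0:ℝ) < Real.exp (2*t) := Real.exp_pos _
        have h2 := mul_le_mul_of_nonneg_right h hp.le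
        rw [inv_mul_cancel₀ (ne_of_gt hp)] at h2
        have he3 : Real.exp (2*t) ≤ 3 := by
          have : Real.exp (2*t) ≤ Real.exp 1 := Real.exp_le_exp.2 (by linarith)
          nlinarith [Real.exp_one_lt_d9]
        nlinarith
      have hslb : t < Real.sinh t := Real.self_lt_sinh_iff.2 ht0
      have hsub : Real.sinh t ≤ 3*t := by
        rw [Real.sinh_eq]
        have em : Real.exp (-t) * Real.exp (2*t) = Real.exp t := by
          rw [← Real.exp_add]; ring_nf
        have he1 : Real.exp (-t) ≤ 1 := Real.exp_le_one_iff.2 (by linarith)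
        have hep : (0:ℝ) < Real.exp (-t) := Real.exp_pos _
        nlinarith [mul_nonneg (sub_nonneg.2 he1) (sub_nonneg.2 hE1)]
      have hs0 : (0:ℝ) < Real.sinh t := lt_trans ht0 hslb
      have hLs_le : Real.log (Real.sinh t) ≤ 0 :=
        Real.log_nonpos hs0.le (by linarith)
      have hLs_ge : Real.log t ≤ Real.log (Real.sinh t) :=
        Real.log_le_log ht0 hslb.le
      have hlt0 : Real.log t ≤ 0 := Real.log_nonpos ht0.le (by linarith)
      rw [Real.norm_eq_abs, Real.norm_eq_abs, abs_mul,
        abs_of_nonpos (by linarith : 1 - Real.exp (2*t) ≤ 0),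
        abs_of_nonpos hLs_le, abs_of_nonpos (mul_nonpos_of_nonpos_of_nonneg hlt0 ht0.le)]
      have hb1 : Real.exp (2*t) - 1 ≤ 6*t := hEkey
      have hb2 : -Real.log (Real.sinh t) ≤ -Real.log t := by linarith
      nlinarith [mul_le_mul hb1 hb2 (by linarith) (by linarith : (0:ℝ) ≤ 6*t)]
    · have h0 := tendsto_log_mul_rpow_nhdsGT_zero one_pos
      simp only [Real.rpow_one] at h0
      have := h0.abs.const_mul (6:ℝ)
      simpa [abs_mul] using this
  have hE : gg = fun t : ℝ => (2*t + (1 + Real.exp (2*t)) * Real.log (Real.cosh t))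
      + (1 - Real.exp (2*t)) * Real.log (Real.sinh t) := rfl
  rw [hE]
  simpa using hA.add hB


lemma gg2_nonpos {t : ℝ} (ht : 0 < t) : gg2 t ≤ 0 := by
  have h4 : (0:ℝ) ≤ 4 * Real.exp (2*t) := by positivity
  exact mul_nonpos_of_nonneg_of_nonpos h4 (sub_nonpos.2 (log_coth_le ht))

lemma continuousOn_gg : ContinuousOn gg (Ici 0) := by
  intro x hx
  rcases eq_or_lt_of_le (show (0:ℝ) ≤ x from hx) with h | h
  · subst h
    rw [← Set.Ioi_insert, continuousWithinAt_insert_self]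
    unfold ContinuousWithinAt
    rw [gg_zero]
    exact tendsto_gg_zero
  · exact (hasDerivAt_gg h).continuousAt.continuousWithinAt

lemma concaveOn_gg : ConcaveOn ℝ (Ici 0) gg := by
  apply concaveOn_of_hasDerivWithinAt2_nonpos (convex_Ici 0) continuousOn_gg
    (f' := gg1) (f'' := gg2)
  · intro x hx
    rw [interior_Ici] at hx
    exact (hasDerivAt_gg hx).hasDerivWithinAt
  · intro x hx
    rw [interior_Ici] at hx
    exact (hasDerivAt_gg1 hx).hasDerivWithinAt
  · intro x hx
    rw [interior_Ici] at hx
    exact gg2_nonpos hx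

lemma f_eq (n : ℕ) (hn : 0 < n) {m : ℝ} (hm : 0 ≤ m) :
    f n m = ((n : ℝ)/2) * gg (m/(4*(n : ℝ))) := by
  have hn0 : ((n : ℝ)) ≠ 0 := Nat.cast_ne_zero.2 hn.ne'
  rcases eq_or_lt_of_le hm with h | h
  · rw [← h]
    simp [f, gg]
  · set t := m/(4*(n : ℝ)) with htdef
    have ht : 0 < t := by
      rw [htdef]
      positivity
    have hs0 : (0:ℝ) < Real.sinh t := Real.self_lt_sinh_iff.2 ht |>.trans_le' ht.le
    have hs : Real.sinh t ≠ 0 := ne_of_gt hs0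
    have hc : Real.cosh t ≠ 0 := ne_of_gt (Real.cosh_pos t)
    have h4 : m/(n : ℝ) = 4*t := by
      rw [htdef]; field_simp
    have h2 : m/(2*(n : ℝ)) = 2*t := by
      rw [htdef]; field_simp; ring
    have hst : Real.exp (4*t) - 1 = 4*Real.exp (2*t)*Real.sinh t*Real.cosh t := by
      rw [Real.sinh_eq, Real.cosh_eq, Real.exp_neg,
        show (4:ℝ)*t = t+t+(t+t) by ring, show (2:ℝ)*t = t+t by ring,
        Real.exp_add, Real.exp_add]
      field_simp [Real.exp_ne_zero]
      ring
    have hlog1 : Real.log ((Real.exp (4*t) - 1)/4)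
        = 2*t + (Real.log (Real.sinh t) + Real.log (Real.cosh t)) := by
      rw [hst, show 4*Real.exp (2*t)*Real.sinh t*Real.cosh t / 4
          = Real.exp (2*t)*(Real.sinh t*Real.cosh t) by ring,
        Real.log_mul (Real.exp_ne_zero _) (by positivity), Real.log_exp,
        Real.log_mul hs hc]
    have hlog2 : Real.log (Real.cosh t / Real.sinh t)
        = Real.log (Real.cosh t) - Real.log (Real.sinh t) := Real.log_div hc hs
    unfold f
    rw [h4, h2, hlog1, hlog2]
    unfold gg
    ring

lemma concaveOn_f (n : ℕ) (hn : 0 < n) : ConcaveOn ℝ (Ici 0) (f n) := by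
  have hg := concaveOn_gg
  refine ⟨convex_Ici 0, ?_⟩
  intro a ha b hb μ ν hμ hν hμν
  have ha' : (0:ℝ) ≤ a := ha
  have hb' : (0:ℝ) ≤ b := hb
  have hab : (0:ℝ) ≤ μ • a + ν • b := by
    simp only [smul_eq_mul]
    positivity
  simp only [smul_eq_mul] at hab ⊢
  rw [f_eq n hn ha', f_eq n hn hb', f_eq n hn hab]
  have mem1 : a/(4*(n : ℝ)) ∈ Ici (0:ℝ) := by
    simp only [mem_Ici]; positivity
  have mem2 : b/(4*(n : ℝ)) ∈ Ici (0:ℝ) := by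
    simp only [mem_Ici]; positivity
  have key := hg.2 mem1 mem2 hμ hν hμν
  simp only [smul_eq_mul] at key
  have harg : μ * (a/(4*(n : ℝ))) + ν * (b/(4*(n : ℝ))) = (μ*a + ν*b)/(4*(n : ℝ)) := by
    ring
  rw [harg] at key
  have hhalf : (0:ℝ) ≤ (n : ℝ)/2 := by positivity
  nlinarith [mul_le_mul_of_nonneg_left key hhalf]

lemma f_zero (n : ℕ) : f n 0 = 0 := by
  simp [f]

/-- **Subadditivity chain for `f_n`**: for all `x, y > 0`,
`f n x + f n y ≥ f n (x+y) ≥ (f n (2x) + f n (2y)) / 2`. -/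
theorem f_subadditivity_chain (n : ℕ) (hn : 0 < n) (x y : ℝ) (hx : 0 < x) (hy : 0 < y) :
    f n x + f n y ≥ f n (x + y) ∧ f n (x + y) ≥ (f n (2 * x) + f n (2 * y)) / 2 := by
  have hconc := concaveOn_f n hn
  have hs0 : (0:ℝ) < x + y := by linarith
  constructor
  · have mem0 : (0:ℝ) ∈ Ici (0:ℝ) := Set.self_mem_Ici
    have mems : x + y ∈ Ici (0:ℝ) := hs0.le
    have key1 := hconc.2 mem0 mems (show (0:ℝ) ≤ y/(x+y) by positivity)
      (show (0:ℝ) ≤ x/(x+y) by positivity) (by field_simp; try ring)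
    have key2 := hconc.2 mem0 mems (show (0:ℝ) ≤ x/(x+y) by positivity)
      (show (0:ℝ) ≤ y/(x+y) by positivity) (by field_simp; try ring)
    simp only [smul_eq_mul, mul_zero, zero_add, f_zero] at key1 key2
    rw [div_mul_cancel₀ _ (ne_of_gt hs0)] at key1 key2
    have hsum : (x/(x+y)) * f n (x+y) + (y/(x+y)) * f n (x+y) = f n (x+y) := by
      field_simp
    linarith
  · have mem1 : 2*x ∈ Ici (0:ℝ) := by simp only [mem_Ici]; linarith
    have mem2 : 2*y ∈ Ici (0:ℝ) := by simp only [mem_Ici]; linarith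
    have key := hconc.2 mem1 mem2 (show (0:ℝ) ≤ 1/2 by norm_num)
      (show (0:ℝ) ≤ 1/2 by norm_num) (by norm_num)
    simp only [smul_eq_mul] at key
    have harg : (1/2 : ℝ) * (2*x) + (1/2 : ℝ) * (2*y) = x + y := by ring
    rw [harg] at key
    linarith
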